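/- Let p be holomorphic on the unit disk D with p(0) = 1 and Taylor coefficients b_n, and let 0 ≤ α < 1. If Re p(z) ≥ α for all z ∈ D, then |b_2 - b_1²/(1-α)| ≤ 2(1-α). -/

import Mathlib

open Complex Metric intervalIntegral MeasureTheory

noncomputable section

lemma my_re_int (f : ℝ → ℂ) (a b : ℝ) (hab : a ≤ b) (hf : IntervalIntegrable f volume a b) :
    (∫ θ in a..b, f θ).re = ∫ θ in a..b, (f θ).re := by
  rw [intervalIntegral.integral_of_le hab, intervalIntegral.integral_of_le hab]
  simp only [← RCLike.re_to_complex]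
  exact (integral_re ((intervalIntegrable_iff_integrableOn_Ioc_of_le hab).mp hf)).symm

lemma my_conj_int (f : ℝ → ℂ) (a b : ℝ) (hab : a ≤ b) :
    (∫ θ in a..b, (starRingEnd ℂ) (f θ)) = (starRingEnd ℂ) (∫ θ in a..b, f θ) := by
  rw [intervalIntegral.integral_of_le hab, intervalIntegral.integral_of_le hab, integral_conj]


lemma cauchy_coeff (p : ℂ → ℂ) (hp : DifferentiableOn ℂ p (ball (0:ℂ) 1))
    (r : ℝ) (hr0 : 0 < r) (hr1 : r < 1) (n : ℕ) :
    (∫ θ in (0:ℝ)..2*Real.pi, exp (-(n * θ * I)) * p ((r:ℂ) * exp (θ * I))) =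
      2 * Real.pi * r ^ n * (iteratedDeriv n p 0 / n.factorial) := by
  have hd : DifferentiableOn ℂ p (closedBall 0 r) := hp.mono (closedBall_subset_ball hr1)
  set R : NNReal := ⟨r, hr0.le⟩ with hR
  have hps : HasFPowerSeriesOnBall p (cauchyPowerSeries p 0 R) 0 R :=
    DifferentiableOn.hasFPowerSeriesOnBall hd hr0
  have h1 := hps.factorial_smul (y := (1:ℂ)) n
  rw [iteratedDeriv_eq_iteratedFDeriv, ← h1, cauchyPowerSeries_apply]
  set S := ∮ z in C(0, (R:ℝ)), ((1:ℂ) / (z - 0)) ^ n • (z - 0)⁻¹ • p z with hSdef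
  have hS : S = (I * ((r:ℂ)^n)⁻¹) * ∫ θ in (0:ℝ)..2*Real.pi, exp (-(n * θ * I)) * p ((r:ℂ) * exp (θ * I)) := by
    rw [hSdef, circleIntegral, ← intervalIntegral.integral_const_mul]
    apply intervalIntegral.integral_congr
    intro θ _
    have hne : exp ((θ:ℂ) * I) ≠ 0 := exp_ne_zero _
    have hrne : (r:ℂ) ≠ 0 := by exact_mod_cast hr0.ne'
    simp only [deriv_circleMap, circleMap_zero, smul_eq_mul, sub_zero]
    rw [show ((R:ℝ):ℂ) = (r:ℂ) from rfl, Complex.exp_neg, show ((n:ℂ) * θ * I) = n * (θ * I) from by ring, Complex.exp_nat_mul]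
    field_simp
    rw [div_pow, one_pow, mul_pow]; field_simp
  rw [hS]
  simp only [smul_eq_mul, nsmul_eq_mul]
  have hπ : (Real.pi:ℂ) ≠ 0 := by exact_mod_cast Real.pi_ne_zero
  have hrne : (r:ℂ) ≠ 0 := by exact_mod_cast hr0.ne'
  have hfac : ((n.factorial : ℕ):ℂ) ≠ 0 := by exact_mod_cast n.factorial_ne_zero
  generalize (∫ θ in (0:ℝ)..2*Real.pi, cexp (-(↑n * ↑θ * I)) * p ((r:ℂ) * cexp (↑θ * I))) = T
  have h2π : Real.pi * 2 = 2 * Real.pi := by ring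
  field_simp

end

lemma cauchy_zero (p : ℂ → ℂ) (hp : DifferentiableOn ℂ p (ball (0:ℂ) 1))
    (r : ℝ) (hr0 : 0 < r) (hr1 : r < 1) (m : ℕ) :
    (∫ θ in (0:ℝ)..2*Real.pi, exp (((m:ℂ)+1) * θ * I) * p ((r:ℂ) * exp (θ * I))) = 0 := by
  have hsub : closedBall (0:ℂ) r ⊆ ball 0 1 := closedBall_subset_ball hr1
  have hc : ContinuousOn (fun z : ℂ => z ^ m * p z) (closedBall 0 r) :=
    (continuous_pow m).continuousOn.mul ((hp.continuousOn).mono hsub)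
  have hd : ∀ z ∈ ball (0:ℂ) r \ (∅ : Set ℂ), DifferentiableAt ℂ (fun z : ℂ => z ^ m * p z) z := by
    intro z hz
    have hz1 : z ∈ ball (0:ℂ) 1 := ball_subset_ball hr1.le hz.1
    exact (differentiableAt_pow m).mul (hp.differentiableAt (isOpen_ball.mem_nhds hz1))
  have hzero := Complex.circleIntegral_eq_zero_of_differentiable_on_off_countable hr0.le
    Set.countable_empty hc hd
  have hkey : (∮ z in C(0, r), z ^ m * p z) =
      (I * (r:ℂ)^(m+1)) * ∫ θ in (0:ℝ)..2*Real.pi, exp (((m:ℂ)+1) * θ * I) * p ((r:ℂ) * exp (θ * I)) := by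
    rw [circleIntegral, ← intervalIntegral.integral_const_mul]
    apply intervalIntegral.integral_congr
    intro θ _
    simp only [deriv_circleMap, circleMap_zero, smul_eq_mul]
    rw [show (((m:ℂ)+1) * θ * I) = θ * I + (m:ℂ) * (θ * I) from by ring, Complex.exp_add,
      Complex.exp_nat_mul]
    ring
  rw [hzero] at hkey
  have hne : (I * (r:ℂ)^(m+1)) ≠ 0 :=
    mul_ne_zero I_ne_zero (pow_ne_zero _ (by exact_mod_cast hr0.ne'))
  exact ((mul_eq_zero.mp hkey.symm).resolve_left hne)

lemma exp_int_zero (m : ℕ) :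
    (∫ θ in (0:ℝ)..2*Real.pi, exp (-(((m:ℂ)+1) * θ * I))) = 0 := by
  have hc : (-(((m:ℂ)+1) * I)) ≠ 0 := by
    exact neg_ne_zero.mpr (mul_ne_zero (Nat.cast_add_one_ne_zero m) I_ne_zero)
  have := integral_exp_mul_complex (a := 0) (b := 2*Real.pi) hc
  rw [show (∫ θ in (0:ℝ)..2*Real.pi, exp (-(((m:ℂ)+1) * θ * I)))
      = ∫ θ in (0:ℝ)..2*Real.pi, exp (-(((m:ℂ)+1) * I) * θ) from by
    apply intervalIntegral.integral_congr; intro θ _; ring_nf, this]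
  rw [show (-(((m:ℂ)+1) * I) * ((2*Real.pi : ℝ):ℂ)) = ((-(m+1) : ℤ) : ℂ) * (2 * Real.pi * I) from by
    push_cast; ring]
  rw [Complex.exp_int_mul_two_pi_mul_I]
  simp

lemma cont_p (p : ℂ → ℂ) (hp : DifferentiableOn ℂ p (ball (0:ℂ) 1))
    (r : ℝ) (hr0 : 0 < r) (hr1 : r < 1) :
    Continuous fun θ : ℝ => p ((r:ℂ) * exp (θ * I)) := by
  have hmap : Continuous fun θ : ℝ => (r:ℂ) * exp ((θ:ℂ) * I) := by continuity
  apply ContinuousOn.comp_continuous hp.continuousOn hmap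
  intro θ
  simp only [mem_ball, dist_zero_right, norm_mul]
  rw [Complex.norm_exp_ofReal_mul_I]
  simp [abs_of_pos hr0, hr1]

lemma re_coeff (α : ℝ) (p : ℂ → ℂ) (hp : DifferentiableOn ℂ p (ball (0:ℂ) 1))
    (r : ℝ) (hr0 : 0 < r) (hr1 : r < 1) (m : ℕ) :
    (∫ θ in (0:ℝ)..2*Real.pi,
        ((((p ((r:ℂ) * exp (θ * I))).re - α : ℝ)) : ℂ) * exp (-(((m:ℂ)+1) * θ * I)))
      = Real.pi * r^(m+1) * (iteratedDeriv (m+1) p 0 / (m+1).factorial) := by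
  have hcont := cont_p p hp r hr0 hr1
  have hEc : Continuous fun θ : ℝ => exp (-(((m:ℂ)+1) * θ * I)) := by continuity
  have hEc' : Continuous fun θ : ℝ => exp ((((m:ℂ)+1) * θ * I)) := by continuity
  have hsplit : ∀ θ : ℝ,
      ((((p ((r:ℂ) * exp (θ * I))).re - α : ℝ)) : ℂ) * exp (-(((m:ℂ)+1) * θ * I))
      = (1/2 : ℂ) * (p ((r:ℂ) * exp (θ * I)) * exp (-(((m:ℂ)+1) * θ * I)))
        + ((1/2 : ℂ) * (starRingEnd ℂ) (p ((r:ℂ) * exp (θ * I)) * exp ((((m:ℂ)+1) * θ * I)))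
          + (-(α:ℂ)) * exp (-(((m:ℂ)+1) * θ * I))) := by
    intro θ
    set z := p ((r:ℂ) * exp (θ * I))
    rw [map_mul, ← Complex.exp_conj]
    have h1 : (starRingEnd ℂ) ((((m:ℂ)+1) * θ * I)) = -(((m:ℂ)+1) * θ * I) := by
      simp [Complex.conj_I]
    rw [h1]
    have h2 : ((z.re - α : ℝ) : ℂ) = (1/2) * z + ((1/2) * (starRingEnd ℂ) z + (-(α:ℂ))) := by
      rw [Complex.ofReal_sub]
      rw [show ((z.re : ℝ) : ℂ) = (z + (starRingEnd ℂ) z) / 2 from by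
        rw [Complex.add_conj]; push_cast; ring]
      ring
    rw [h2]; ring
  rw [intervalIntegral.integral_congr (fun θ _ => hsplit θ)]
  have i1 : IntervalIntegrable (fun θ : ℝ => (1/2 : ℂ) * (p ((r:ℂ) * exp (θ * I)) * exp (-(((m:ℂ)+1) * θ * I)))) MeasureTheory.volume 0 (2*Real.pi) :=
    (continuous_const.mul (hcont.mul hEc)).intervalIntegrable _ _
  have i2 : IntervalIntegrable (fun θ : ℝ => (1/2 : ℂ) * (starRingEnd ℂ) (p ((r:ℂ) * exp (θ * I)) * exp ((((m:ℂ)+1) * θ * I)))) MeasureTheory.volume 0 (2*Real.pi) :=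
    (continuous_const.mul (Complex.continuous_conj.comp (hcont.mul hEc'))).intervalIntegrable _ _
  have i3 : IntervalIntegrable (fun θ : ℝ => (-(α:ℂ)) * exp (-(((m:ℂ)+1) * θ * I))) MeasureTheory.volume 0 (2*Real.pi) :=
    (continuous_const.mul hEc).intervalIntegrable _ _
  rw [intervalIntegral.integral_add i1 (i2.add i3), intervalIntegral.integral_add i2 i3,
    intervalIntegral.integral_const_mul, intervalIntegral.integral_const_mul,
    intervalIntegral.integral_const_mul]
  have h2π : (0:ℝ) ≤ 2 * Real.pi := by positivity
  rw [show (fun θ : ℝ => (starRingEnd ℂ) (p ((r:ℂ) * exp (θ * I)) * exp ((((m:ℂ)+1) * θ * I)))) = fun θ : ℝ => (starRingEnd ℂ) ((fun θ : ℝ => p ((r:ℂ) * exp (θ * I)) * exp ((((m:ℂ)+1) * θ * I))) θ) from rfl]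
  rw [my_conj_int _ _ _ h2π]
  rw [show (∫ θ in (0:ℝ)..2*Real.pi, p ((r:ℂ) * exp (θ * I)) * exp ((((m:ℂ)+1)) * θ * I))
      = ∫ θ in (0:ℝ)..2*Real.pi, exp ((((m:ℂ)+1)) * θ * I) * p ((r:ℂ) * exp (θ * I)) from
    intervalIntegral.integral_congr (fun θ _ => mul_comm _ _)]
  rw [show (∫ θ in (0:ℝ)..2*Real.pi, p ((r:ℂ) * exp (θ * I)) * exp (-(((m:ℂ)+1) * θ * I)))
      = ∫ θ in (0:ℝ)..2*Real.pi, exp (-(((m:ℂ)+1) * θ * I)) * p ((r:ℂ) * exp (θ * I)) from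
    intervalIntegral.integral_congr (fun θ _ => mul_comm _ _)]
  rw [ cauchy_zero p hp r hr0 hr1 m, map_zero, exp_int_zero m]
  have hcc := cauchy_coeff p hp r hr0 hr1 (m+1)
  push_cast at hcc
  rw [hcc]
  ring

lemma re_mass (p : ℂ → ℂ) (hp : DifferentiableOn ℂ p (ball (0:ℂ) 1))
    (r : ℝ) (hr0 : 0 < r) (hr1 : r < 1) :
    (∫ θ in (0:ℝ)..2*Real.pi, (p ((r:ℂ) * exp (θ * I))).re) = 2 * Real.pi * (p 0).re := by
  have h := cauchy_coeff p hp r hr0 hr1 0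
  simp only [Nat.cast_zero, zero_mul, neg_zero, Complex.exp_zero, one_mul, pow_zero, mul_one,
    iteratedDeriv_zero, Nat.factorial_zero, Nat.cast_one, div_one] at h
  have h2π : (0:ℝ) ≤ 2 * Real.pi := by positivity
  have hint : IntervalIntegrable (fun θ : ℝ => p ((r:ℂ) * exp (θ * I))) MeasureTheory.volume 0 (2*Real.pi) :=
    (cont_p p hp r hr0 hr1).intervalIntegrable _ _
  have := my_re_int _ _ _ h2π hint
  rw [h] at this
  rw [← this]
  simp [Complex.mul_re]

lemma core (g : ℝ → ℝ) (hg : Continuous g) (hgpos : ∀ θ, 0 ≤ g θ) (M : ℝ) (hM : 0 < M)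
    (hM0 : (∫ θ in (0:ℝ)..2*Real.pi, g θ) = M)
    (A B : ℂ)
    (hA : (∫ θ in (0:ℝ)..2*Real.pi, (g θ : ℂ) * exp (-(θ * I))) = A)
    (hB : (∫ θ in (0:ℝ)..2*Real.pi, (g θ : ℂ) * exp (-(2 * θ * I))) = B) :
    ‖B - 2 * A^2 / (M:ℂ)‖ ≤ M := by
  have h2π : (0:ℝ) ≤ 2 * Real.pi := by positivity
  have hMc : (M:ℂ) ≠ 0 := by exact_mod_cast hM.ne'
  set a : ℂ := A / M with ha
  set E : ℝ → ℂ := fun θ => exp (-(θ * I)) with hE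
  have hEcont : Continuous E := by continuity
  have hgc : Continuous fun θ : ℝ => ((g θ : ℝ) : ℂ) := Complex.continuous_ofReal.comp hg
  -- complex mass
  have hMc0 : (∫ θ in (0:ℝ)..2*Real.pi, ((g θ : ℝ):ℂ)) = (M:ℂ) := by
    rw [intervalIntegral.integral_ofReal, hM0]
  -- identity
  have hiden : (∫ θ in (0:ℝ)..2*Real.pi, (g θ : ℂ) * (E θ - a)^2) = B - 2*a*A + a^2*M := by
    have hsplit : ∀ θ ∈ Set.uIcc (0:ℝ) (2*Real.pi), (g θ : ℂ) * (E θ - a)^2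
        = (g θ : ℂ) * exp (-(2 * θ * I)) + ((-(2*a)) * ((g θ : ℂ) * E θ) + a^2 * (g θ : ℂ)) := by
      intro θ _
      have hsq : E θ ^ 2 = exp (-(2 * θ * I)) := by
        rw [hE, sq, ← Complex.exp_add]; congr 1; ring
      rw [← hsq]; ring
    rw [intervalIntegral.integral_congr hsplit]
    have i1 : IntervalIntegrable (fun θ : ℝ => (g θ : ℂ) * exp (-(2 * θ * I))) MeasureTheory.volume 0 (2*Real.pi) :=
      (hgc.mul (by continuity)).intervalIntegrable _ _
    have i2 : IntervalIntegrable (fun θ : ℝ => (-(2*a)) * ((g θ : ℂ) * E θ)) MeasureTheory.volume 0 (2*Real.pi) :=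
      (continuous_const.mul (hgc.mul hEcont)).intervalIntegrable _ _
    have i3 : IntervalIntegrable (fun θ : ℝ => a^2 * (g θ : ℂ)) MeasureTheory.volume 0 (2*Real.pi) :=
      (continuous_const.mul hgc).intervalIntegrable _ _
    rw [intervalIntegral.integral_add i1 (i2.add i3), intervalIntegral.integral_add i2 i3,
      intervalIntegral.integral_const_mul, intervalIntegral.integral_const_mul, hB, hA, hMc0]
    ring
  -- rewrite target
  have htarget : B - 2 * A^2 / (M:ℂ) = (∫ θ in (0:ℝ)..2*Real.pi, (g θ : ℂ) * (E θ - a)^2) - a^2 * M := by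
    rw [hiden, ha]; field_simp; ring
  rw [htarget]
  -- real integral computation
  have hreal : (∫ θ in (0:ℝ)..2*Real.pi, g θ * ‖E θ - a‖^2) = M - Complex.normSq a * M := by
    have hsplit : ∀ θ ∈ Set.uIcc (0:ℝ) (2*Real.pi), g θ * ‖E θ - a‖^2
        = (1 + Complex.normSq a) * g θ - 2 * (g θ * (E θ * (starRingEnd ℂ) a).re) := by
      intro θ _
      have h1 : ‖E θ‖ = 1 := by
        rw [hE]; simp [Complex.norm_exp]
      rw [Complex.sq_norm, Complex.normSq_sub, Complex.normSq_apply (E θ)]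
      rw [show (E θ).re * (E θ).re + (E θ).im * (E θ).im = ‖E θ‖^2 from by
        rw [Complex.sq_norm, Complex.normSq_apply], h1]
      ring
    rw [intervalIntegral.integral_congr hsplit]
    have i1 : IntervalIntegrable (fun θ : ℝ => (1 + Complex.normSq a) * g θ) MeasureTheory.volume 0 (2*Real.pi) :=
      (continuous_const.mul hg).intervalIntegrable _ _
    have i2 : IntervalIntegrable (fun θ : ℝ => 2 * (g θ * (E θ * (starRingEnd ℂ) a).re)) MeasureTheory.volume 0 (2*Real.pi) := by
      apply Continuous.intervalIntegrable
      exact continuous_const.mul (hg.mul (Complex.continuous_re.comp (hEcont.mul continuous_const)))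
    rw [intervalIntegral.integral_sub i1 i2, intervalIntegral.integral_const_mul,
      intervalIntegral.integral_const_mul, hM0]
    have hre2 : (∫ θ in (0:ℝ)..2*Real.pi, g θ * (E θ * (starRingEnd ℂ) a).re) = Complex.normSq a * M := by
      have heq : ∀ θ ∈ Set.uIcc (0:ℝ) (2*Real.pi), g θ * (E θ * (starRingEnd ℂ) a).re
          = (((g θ : ℝ):ℂ) * E θ * (starRingEnd ℂ) a).re := by
        intro θ _
        rw [mul_assoc, Complex.re_ofReal_mul]
      rw [intervalIntegral.integral_congr heq]
      have hint : IntervalIntegrable (fun θ : ℝ => ((g θ : ℝ):ℂ) * E θ * (starRingEnd ℂ) a) MeasureTheory.volume 0 (2*Real.pi) :=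
        ((hgc.mul hEcont).mul continuous_const).intervalIntegrable _ _
      rw [← my_re_int _ _ _ h2π hint]
      have : (∫ θ in (0:ℝ)..2*Real.pi, ((g θ : ℝ):ℂ) * E θ * (starRingEnd ℂ) a)
          = (∫ θ in (0:ℝ)..2*Real.pi, ((g θ : ℝ):ℂ) * E θ) * (starRingEnd ℂ) a := by
        rw [← intervalIntegral.integral_mul_const]
      rw [this, hA, ha]
      have hre3 : A * (starRingEnd ℂ) (A / (M:ℂ)) = ((Complex.normSq (A/(M:ℂ)) * M : ℝ) : ℂ) := by
        rw [show A = (A/(M:ℂ)) * (M:ℂ) from by field_simp]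
        rw [show (A / (M:ℂ) * (M:ℂ)) * (starRingEnd ℂ) (A/(M:ℂ) * (M:ℂ) /(M:ℂ))
            = ((A/(M:ℂ)) * (starRingEnd ℂ) (A/(M:ℂ) * (M:ℂ) /(M:ℂ))) * (M:ℂ) from by ring]
        rw [show A/(M:ℂ) * (M:ℂ) /(M:ℂ) = A/(M:ℂ) from by field_simp]
        rw [Complex.mul_conj]
        push_cast
        ring
      rw [hre3, Complex.ofReal_re]
    rw [hre2]
    ring
  have h1 : ‖∫ θ in (0:ℝ)..2*Real.pi, (g θ : ℂ) * (E θ - a)^2‖ ≤ M - Complex.normSq a * M := by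
    rw [← hreal]
    refine le_trans (intervalIntegral.norm_integral_le_integral_norm h2π) (le_of_eq ?_)
    apply intervalIntegral.integral_congr
    intro θ _
    show ‖(g θ:ℂ) * (E θ - a)^2‖ = g θ * ‖E θ - a‖^2
    rw [norm_mul, Complex.norm_real, Real.norm_eq_abs,
      _root_.abs_of_nonneg (hgpos θ), norm_pow]
  have h2 : ‖a^2 * (M:ℂ)‖ = Complex.normSq a * M := by
    rw [norm_mul, norm_pow, Complex.sq_norm, Complex.norm_real, Real.norm_eq_abs, abs_of_pos hM]
  calc ‖(∫ θ in (0:ℝ)..2*Real.pi, (g θ : ℂ) * (E θ - a)^2) - a^2 * (M:ℂ)‖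
      ≤ ‖∫ θ in (0:ℝ)..2*Real.pi, (g θ : ℂ) * (E θ - a)^2‖ + ‖a^2 * (M:ℂ)‖ := by
        exact norm_sub_le _ _
    _ ≤ (M - Complex.normSq a * M) + Complex.normSq a * M := add_le_add h1 (le_of_eq h2)
    _ = M := by ring

lemma radius_bound (α : ℝ) (hα1 : α < 1)
    (p : ℂ → ℂ) (hp : DifferentiableOn ℂ p (ball (0:ℂ) 1))
    (h0 : p 0 = 1)
    (b : ℕ → ℂ) (hb : ∀ n, b n = iteratedDeriv n p 0 / (Nat.factorial n))
    (hre : ∀ z ∈ ball (0:ℂ) 1, α ≤ (p z).re)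
    (r : ℝ) (hr0 : 0 < r) (hr1 : r < 1) :
    ‖b 2 - b 1 ^ 2 / (1 - (α:ℂ))‖ * r^2 ≤ 2 * (1 - α) := by
  have h2π : (0:ℝ) ≤ 2 * Real.pi := by positivity
  have hπ : (0:ℝ) < Real.pi := Real.pi_pos
  set g : ℝ → ℝ := fun θ => (p ((r:ℂ) * exp ((θ:ℂ) * I))).re - α with hgdef
  have hmem : ∀ θ : ℝ, (r:ℂ) * exp ((θ:ℂ) * I) ∈ ball (0:ℂ) 1 := by
    intro θ
    simp only [mem_ball, dist_zero_right, norm_mul]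
    rw [Complex.norm_exp_ofReal_mul_I]
    simp [abs_of_pos hr0, hr1]
  have hgpos : ∀ θ, 0 ≤ g θ := fun θ => sub_nonneg.mpr (hre _ (hmem θ))
  have hgcont : Continuous g := (Complex.continuous_re.comp (cont_p p hp r hr0 hr1)).sub continuous_const
  have hM : (0:ℝ) < 2 * Real.pi * (1 - α) := by
    have : (0:ℝ) < 1 - α := by linarith
    positivity
  have hM0 : (∫ θ in (0:ℝ)..2*Real.pi, g θ) = 2 * Real.pi * (1 - α) := by
    have i1 : IntervalIntegrable (fun θ : ℝ => (p ((r:ℂ) * exp ((θ:ℂ) * I))).re) MeasureTheory.volume 0 (2*Real.pi) :=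
      (Complex.continuous_re.comp (cont_p p hp r hr0 hr1)).intervalIntegrable _ _
    have i2 : IntervalIntegrable (fun _ : ℝ => α) MeasureTheory.volume 0 (2*Real.pi) :=
      intervalIntegrable_const
    rw [hgdef]
    rw [intervalIntegral.integral_sub i1 i2, re_mass p hp r hr0 hr1, h0]
    simp
    ring
  have hA := re_coeff α p hp r hr0 hr1 0
  have hB := re_coeff α p hp r hr0 hr1 1
  norm_num at hA hB
  -- hA : ∫ ↑(g θ) * exp (-(θ*I)) = π r b1-ish
  have hAg : (∫ θ in (0:ℝ)..2*Real.pi, ((g θ : ℝ):ℂ) * exp (-((θ:ℂ) * I))) = Real.pi * r * b 1 := by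
    rw [hgdef]
    push_cast
    rw [hA, hb 1]
    norm_num
  have hBg : (∫ θ in (0:ℝ)..2*Real.pi, ((g θ : ℝ):ℂ) * exp (-(2 * (θ:ℂ) * I))) = Real.pi * r^2 * b 2 := by
    rw [hgdef]
    push_cast
    rw [hB, hb 2]
    norm_num
  have hcore := core g hgcont hgpos (2 * Real.pi * (1 - α)) hM hM0 _ _ hAg hBg
  -- rewrite the complex expression
  have hα : (1:ℂ) - (α:ℂ) ≠ 0 := by
    rw [show (1:ℂ) - (α:ℂ) = ((1 - α : ℝ):ℂ) from by push_cast; ring]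
    exact_mod_cast (by linarith : (1:ℝ) - α ≠ 0)
  have hπc : (Real.pi : ℂ) ≠ 0 := by exact_mod_cast hπ.ne'
  have hkey : (Real.pi : ℂ) * r^2 * b 2 - 2 * ((Real.pi:ℂ) * r * b 1)^2 / ((2 * Real.pi * (1 - α) : ℝ):ℂ)
      = (Real.pi : ℂ) * r^2 * (b 2 - b 1^2 / (1 - (α:ℂ))) := by
    rw [show ((2 * Real.pi * (1 - α) : ℝ):ℂ) = 2 * (Real.pi:ℂ) * (1 - (α:ℂ)) from by push_cast; ring]
    field_simp
  rw [hkey] at hcore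
  rw [norm_mul, norm_mul, Complex.norm_real, Real.norm_eq_abs, abs_of_pos hπ, norm_pow, Complex.norm_real,
    Real.norm_eq_abs, _root_.abs_of_pos hr0] at hcore
  nlinarith [norm_nonneg (b 2 - b 1^2 / (1 - (α:ℂ)))]

theorem stmt_3 (α : ℝ) (hα0 : 0 ≤ α) (hα1 : α < 1)
    (p : ℂ → ℂ) (hp : DifferentiableOn ℂ p (ball (0:ℂ) 1))
    (h0 : p 0 = 1)
    (b : ℕ → ℂ) (hb : ∀ n, b n = iteratedDeriv n p 0 / (Nat.factorial n))
    (hre : ∀ z ∈ ball (0:ℂ) 1, α ≤ (p z).re) :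
    ‖b 2 - b 1 ^ 2 / (1 - (α:ℂ))‖ ≤ 2 * (1 - α) := by
  have key := radius_bound α hα1 p hp h0 b hb hre
  set T := ‖b 2 - b 1 ^ 2 / (1 - (α:ℂ))‖ with hT
  have htend : Filter.Tendsto (fun r : ℝ => T * r^2) (nhdsWithin 1 (Set.Ioo (0:ℝ) 1)) (nhds (T * 1^2)) :=
    (Continuous.tendsto (by continuity) 1).mono_left nhdsWithin_le_nhds
  have hne : (nhdsWithin (1:ℝ) (Set.Ioo 0 1)).NeBot := right_nhdsWithin_Ioo_neBot (by norm_num)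
  have hle := le_of_tendsto htend (Filter.eventually_of_mem self_mem_nhdsWithin
    (fun r hr => key r hr.1 hr.2))
  simpa using hle
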